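/- For any a ∈ ℝⁿ and polynomial mapping f : ℝⁿ → ℝ^p, the set S_a(f) of asymptotic ρ_a-nonregular values is a closed subset of ℝ^p. -/

import Mathlib

open Filter Topology MvPolynomial Set

noncomputable section

/-- The polynomial mapping `ℝⁿ → ℝᵖ` associated to a family of polynomials. -/
def Fmap (n p : ℕ) (f : Fin p → MvPolynomial (Fin n) ℝ) (x : EuclideanSpace ℝ (Fin n)) :
    EuclideanSpace ℝ (Fin p) := WithLp.toLp 2 (fun i => MvPolynomial.eval (fun j => x j) (f i))

/-- The Milnor set `M_a(f)`: the critical set of `(f, ρ_a)`, `ρ_a(x) = ‖x - a‖²`. -/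
def MilnorP (n p : ℕ) (f : Fin p → MvPolynomial (Fin n) ℝ) (a : EuclideanSpace ℝ (Fin n)) :
    Set (EuclideanSpace ℝ (Fin n)) :=
  {x | ¬ Function.Surjective (fderiv ℝ (fun y => (Fmap n p f y, ‖y - a‖ ^ 2)) x)}

/-- The Rabier function `ν(A) = inf_{‖ψ‖=1} ‖A* ψ‖`. -/
def nu (n p : ℕ) (A : EuclideanSpace ℝ (Fin n) →L[ℝ] EuclideanSpace ℝ (Fin p)) : ℝ :=
  sInf {r | ∃ ψ : EuclideanSpace ℝ (Fin p), ‖ψ‖ = 1 ∧ r = ‖ContinuousLinearMap.adjoint A ψ‖}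

/-- `S_a(f)`: asymptotic `ρ_a`-nonregular values. -/
def SaSet (n p : ℕ) (f : Fin p → MvPolynomial (Fin n) ℝ) (a : EuclideanSpace ℝ (Fin n)) :
    Set (EuclideanSpace ℝ (Fin p)) :=
  {c | ∃ x : ℕ → EuclideanSpace ℝ (Fin n), (∀ j, x j ∈ MilnorP n p f a) ∧
    Tendsto (fun j => ‖x j‖) atTop atTop ∧ Tendsto (fun j => Fmap n p f (x j)) atTop (𝓝 c)}

/-- For every `a ∈ ℝⁿ`, the set `S_a(f)` of asymptotic `ρ_a`-nonregular values is closed. -/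
theorem Sa_isClosed (n p : ℕ) (hpn : p ≤ n) (f : Fin p → MvPolynomial (Fin n) ℝ)
    (a : EuclideanSpace ℝ (Fin n)) : IsClosed (SaSet n p f a) := by
  apply IsSeqClosed.isClosed
  intro u c hu huc
  choose x hxM hxnorm hxf using hu
  have hsel : ∀ k : ℕ, ∃ j, (k : ℝ) ≤ ‖x k j‖ ∧
      dist (Fmap n p f (x k j)) (u k) < 1/(k+1) := by
    intro k
    have h1 := (hxnorm k).eventually_ge_atTop (k : ℝ)
    have h2 := (hxf k).eventually
      (Metric.ball_mem_nhds (u k) (by positivity : (0:ℝ) < 1/(k+1)))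
    obtain ⟨j, hj1, hj2⟩ := (h1.and h2).exists
    exact ⟨j, hj1, hj2⟩
  choose j hj1 hj2 using hsel
  refine ⟨fun k => x k (j k), fun k => hxM k (j k), ?_, ?_⟩
  · exact tendsto_atTop_mono (fun k => hj1 k) tendsto_natCast_atTop_atTop
  · rw [tendsto_iff_dist_tendsto_zero]
    have hb : ∀ k, dist (Fmap n p f (x k (j k))) c ≤ 1/(k+1) + dist (u k) c := fun k =>
      (dist_triangle _ (u k) c).trans (by linarith [le_of_lt (hj2 k)])
    refine squeeze_zero (fun k => dist_nonneg) hb ?_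
    have h1 : Tendsto (fun k : ℕ => 1/((k:ℝ)+1)) atTop (𝓝 0) :=
      tendsto_one_div_add_atTop_nhds_zero_nat
    have h2 : Tendsto (fun k => dist (u k) c) atTop (𝓝 0) :=
      tendsto_iff_dist_tendsto_zero.mp huc
    simpa using h1.add h2
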